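/- Let α ∈ (0,1) and let F and G be cumulative distribution functions with ∫_{−∞}^0 F(y) dy < ∞ and ∫_{−∞}^0 G(y) dy < ∞. Then 0 ≤ CVaR_α(G) − CVaR_α(F) + (1/α)∫_{−∞}^{VaR_α(F)} (G(y) − F(y)) dy ≤ (1/α) · (sup_y |F(y) − G(y)|) · |VaR_α(F) − VaR_α(G)|. -/

import Mathlib

open MeasureTheory

/-- A cumulative distribution function: nondecreasing, right-continuous,
tending to `0` at `−∞` and to `1` at `+∞`. -/
def IsCDF (F : ℝ → ℝ) : Prop :=
  Monotone F ∧ (∀ y : ℝ, ContinuousWithinAt F (Set.Ici y) y) ∧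
    Filter.Tendsto F Filter.atBot (nhds 0) ∧ Filter.Tendsto F Filter.atTop (nhds 1)

/-- Value-at-risk at level `α`: `VaR_α(F) = inf{ y : F y ≥ α }`. -/
noncomputable def VaR (α : ℝ) (F : ℝ → ℝ) : ℝ :=
  sInf {y : ℝ | α ≤ F y}

/-- Conditional value-at-risk at level `α`:
`CVaR_α(F) = VaR_α(F) − (1/α) ∫_{−∞}^{VaR_α(F)} F(y) dy`. -/
noncomputable def CVaR (α : ℝ) (F : ℝ → ℝ) : ℝ :=
  VaR α F - (1 / α) * ∫ y in Set.Iio (VaR α F), F y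

lemma cdf_nonneg {F : ℝ → ℝ} (hF : IsCDF F) (y : ℝ) : 0 ≤ F y :=
  Monotone.le_of_tendsto hF.1 hF.2.2.1 y

lemma cdf_le_one {F : ℝ → ℝ} (hF : IsCDF F) (y : ℝ) : F y ≤ 1 :=
  Monotone.ge_of_tendsto hF.1 hF.2.2.2 y

lemma VaR_set_nonempty {α : ℝ} (hα : α < 1) {F : ℝ → ℝ} (hF : IsCDF F) :
    {y : ℝ | α ≤ F y}.Nonempty := by
  obtain ⟨y, hy⟩ := (hF.2.2.2.eventually (eventually_gt_nhds hα)).exists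
  exact ⟨y, hy.le⟩

lemma VaR_set_bddBelow {α : ℝ} (hα : 0 < α) {F : ℝ → ℝ} (hF : IsCDF F) :
    BddBelow {y : ℝ | α ≤ F y} := by
  obtain ⟨z, hz⟩ := (hF.2.2.1.eventually (eventually_lt_nhds hα)).exists
  refine ⟨z, fun y hy => ?_⟩
  by_contra h
  push_neg at h
  exact absurd (le_trans hy (hF.1 h.le)) (not_le.mpr hz)

lemma VaR_lt {α : ℝ} (hα : 0 < α) {F : ℝ → ℝ} (hF : IsCDF F) {y : ℝ}
    (hy : y < VaR α F) : F y < α := by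
  by_contra h
  push_neg at h
  exact absurd (csInf_le (VaR_set_bddBelow hα hF) h) (not_le.mpr hy)

lemma VaR_spec {α : ℝ} (hα : α ∈ Set.Ioo (0:ℝ) 1) {F : ℝ → ℝ} (hF : IsCDF F) :
    α ≤ F (VaR α F) := by
  set a := VaR α F with ha
  have key : ∀ t ∈ Set.Ioi a, α ≤ F t := by
    intro t ht
    obtain ⟨y, hy, hyt⟩ := (csInf_lt_iff (VaR_set_bddBelow hα.1 hF)
      (VaR_set_nonempty hα.2 hF)).mp ht
    exact le_trans hy (hF.1 hyt.le)
  have hc : Filter.Tendsto F (nhdsWithin a (Set.Ioi a)) (nhds (F a)) :=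
    (hF.2.1 a).mono_left (nhdsWithin_mono a Set.Ioi_subset_Ici_self)
  exact ge_of_tendsto hc ((eventually_mem_nhdsWithin).mono key)

lemma cdf_integrableOn_bdd {F : ℝ → ℝ} (hF : IsCDF F) {s : Set ℝ}
    (hs : MeasurableSet s) (hfin : volume s ≠ ⊤) : IntegrableOn F s := by
  refine Measure.integrableOn_of_bounded (M := 1) hfin (hF.1.measurable.aestronglyMeasurable) ?_
  filter_upwards with x
  rw [Real.norm_eq_abs, abs_le]
  exact ⟨by linarith [cdf_nonneg hF x], cdf_le_one hF x⟩

lemma cdf_integrableOn_Iio {F : ℝ → ℝ} (hF : IsCDF F)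
    (hInt : IntegrableOn F (Set.Iic 0)) (a : ℝ) : IntegrableOn F (Set.Iio a) := by
  have h1 : IntegrableOn F (Set.Iic 0 ∪ Set.Ioc 0 a) :=
    hInt.union (cdf_integrableOn_bdd hF measurableSet_Ioc (by simp))
  refine h1.mono_set ?_
  intro x hx
  rcases le_or_gt x 0 with h | h
  · exact Or.inl h
  · exact Or.inr ⟨h, le_of_lt hx⟩

/-- The CVaR residual bound:
`0 ≤ CVaR_α(G) − CVaR_α(F) + (1/α)∫_{−∞}^{VaR_α(F)} (G − F)
   ≤ (1/α) · sup_y |F(y) − G(y)| · |VaR_α(F) − VaR_α(G)|`. -/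
theorem CVaR_residual (α : ℝ) (hα : α ∈ Set.Ioo (0 : ℝ) 1)
    (F G : ℝ → ℝ) (hF : IsCDF F) (hG : IsCDF G)
    (hIntF : IntegrableOn F (Set.Iic (0 : ℝ)))
    (hIntG : IntegrableOn G (Set.Iic (0 : ℝ))) :
    0 ≤ CVaR α G - CVaR α F + (1 / α) * ∫ y in Set.Iio (VaR α F), (G y - F y) ∧
      CVaR α G - CVaR α F + (1 / α) * ∫ y in Set.Iio (VaR α F), (G y - F y) ≤
        (1 / α) * (⨆ y : ℝ, |F y - G y|) * |VaR α F - VaR α G| := by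
  obtain ⟨hα0, hα1⟩ := hα
  set a := VaR α F with ha
  set b := VaR α G with hb
  set M := ⨆ y : ℝ, |F y - G y| with hMdef
  have hbdd : BddAbove (Set.range fun y : ℝ => |F y - G y|) := by
    refine ⟨1, ?_⟩
    rintro _ ⟨y, rfl⟩
    rw [abs_sub_le_iff]
    constructor <;> linarith [cdf_nonneg hF y, cdf_le_one hF y, cdf_nonneg hG y, cdf_le_one hG y]
  have hM : ∀ y, |F y - G y| ≤ M := fun y => le_ciSup hbdd y
  have hM0 : 0 ≤ M := le_trans (abs_nonneg _) (hM 0)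
  have hGa : IntegrableOn G (Set.Iio a) := cdf_integrableOn_Iio hG hIntG a
  have hFa : IntegrableOn F (Set.Iio a) := cdf_integrableOn_Iio hF hIntF a
  have hGb : IntegrableOn G (Set.Iio b) := cdf_integrableOn_Iio hG hIntG b
  have hsub : (∫ y in Set.Iio a, (G y - F y)) =
      (∫ y in Set.Iio a, G y) - ∫ y in Set.Iio a, F y := integral_sub hGa hFa
  have hα0' : 0 < 1 / α := by positivity
  -- the key expression
  have hX : CVaR α G - CVaR α F + (1 / α) * ∫ y in Set.Iio a, (G y - F y) =
      (b - a) + (1 / α) * ((∫ y in Set.Iio a, G y) - ∫ y in Set.Iio b, G y) := by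
    rw [hsub]; unfold CVaR; rw [← ha, ← hb]; ring
  rcases le_total a b with hab | hab
  · -- a ≤ b
    have hdisj : Disjoint (Set.Iio a) (Set.Ico a b) :=
      (Set.Iio_disjoint_Ici le_rfl).mono_right Set.Ico_subset_Ici_self
    have hGico : IntegrableOn G (Set.Ico a b) :=
      cdf_integrableOn_bdd hG measurableSet_Ico (by simp)
    have hsplit : (∫ y in Set.Iio b, G y) =
        (∫ y in Set.Iio a, G y) + ∫ y in Set.Ico a b, G y := by
      rw [← setIntegral_union hdisj measurableSet_Ico hGa hGico, Set.Iio_union_Ico_eq_Iio hab]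
    have hconst : (∫ _ in Set.Ico a b, α) = (b - a) * α := by
      rw [setIntegral_const, Real.volume_real_Ico_of_le (by linarith), smul_eq_mul]
    have hXval : CVaR α G - CVaR α F + (1 / α) * ∫ y in Set.Iio a, (G y - F y) =
        (1 / α) * ∫ y in Set.Ico a b, (α - G y) := by
      rw [hX, hsplit, integral_sub ((integrableOn_const_iff (C := α)).mpr (Or.inr (by simp))) hGico, hconst]
      have hne : (α : ℝ) ≠ 0 := ne_of_gt hα0
      field_simp
      ring
    have hFlow : ∀ y ∈ Set.Ico a b, α ≤ F y := fun y hy =>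
      le_trans (VaR_spec ⟨hα0, hα1⟩ hF) (hF.1 hy.1)
    have hGhigh : ∀ y ∈ Set.Ico a b, G y < α := fun y hy => VaR_lt hα0 hG hy.2
    constructor
    · rw [hXval]
      refine mul_nonneg hα0'.le (setIntegral_nonneg measurableSet_Ico ?_)
      intro y hy
      linarith [hGhigh y hy]
    · rw [hXval]
      have hle : (∫ y in Set.Ico a b, (α - G y)) ≤ ∫ _ in Set.Ico a b, M := by
        refine setIntegral_mono_on
          (((integrableOn_const_iff).mpr (Or.inr (by simp))).sub hGico)
          ((integrableOn_const_iff).mpr (Or.inr (by simp))) measurableSet_Ico ?_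
        intro y hy
        calc α - G y ≤ F y - G y := by linarith [hFlow y hy]
          _ ≤ |F y - G y| := le_abs_self _
          _ ≤ M := hM y
      have : (∫ _ in Set.Ico a b, M) = (b - a) * M := by
        rw [setIntegral_const, Real.volume_real_Ico_of_le (by linarith), smul_eq_mul]
      rw [abs_sub_comm, abs_of_nonneg (by linarith : (0:ℝ) ≤ b - a)]
      calc (1/α) * ∫ y in Set.Ico a b, (α - G y) ≤ (1/α) * ((b - a) * M) := by
            rw [← this]; exact mul_le_mul_of_nonneg_left hle hα0'.le
        _ = 1 / α * M * (b - a) := by ring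
  · -- b ≤ a
    have hdisj : Disjoint (Set.Iio b) (Set.Ico b a) :=
      (Set.Iio_disjoint_Ici le_rfl).mono_right Set.Ico_subset_Ici_self
    have hGico : IntegrableOn G (Set.Ico b a) :=
      cdf_integrableOn_bdd hG measurableSet_Ico (by simp)
    have hsplit : (∫ y in Set.Iio a, G y) =
        (∫ y in Set.Iio b, G y) + ∫ y in Set.Ico b a, G y := by
      rw [← setIntegral_union hdisj measurableSet_Ico hGb hGico, Set.Iio_union_Ico_eq_Iio hab]
    have hconst : (∫ _ in Set.Ico b a, α) = (a - b) * α := by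
      rw [setIntegral_const, Real.volume_real_Ico_of_le (by linarith), smul_eq_mul]
    have hXval : CVaR α G - CVaR α F + (1 / α) * ∫ y in Set.Iio a, (G y - F y) =
        (1 / α) * ∫ y in Set.Ico b a, (G y - α) := by
      rw [hX, hsplit, integral_sub hGico ((integrableOn_const_iff).mpr (Or.inr (by simp))), hconst]
      have hne : (α : ℝ) ≠ 0 := ne_of_gt hα0
      field_simp
      ring
    have hFlow : ∀ y ∈ Set.Ico b a, F y < α := fun y hy => VaR_lt hα0 hF hy.2
    have hGhigh : ∀ y ∈ Set.Ico b a, α ≤ G y := fun y hy =>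
      le_trans (VaR_spec ⟨hα0, hα1⟩ hG) (hG.1 hy.1)
    constructor
    · rw [hXval]
      refine mul_nonneg hα0'.le (setIntegral_nonneg measurableSet_Ico ?_)
      intro y hy
      linarith [hGhigh y hy]
    · rw [hXval]
      have hle : (∫ y in Set.Ico b a, (G y - α)) ≤ ∫ _ in Set.Ico b a, M := by
        refine setIntegral_mono_on
          (hGico.sub ((integrableOn_const_iff).mpr (Or.inr (by simp))))
          ((integrableOn_const_iff).mpr (Or.inr (by simp))) measurableSet_Ico ?_
        intro y hy
        calc G y - α ≤ G y - F y := by linarith [hFlow y hy]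
          _ ≤ |G y - F y| := le_abs_self _
          _ = |F y - G y| := abs_sub_comm _ _
          _ ≤ M := hM y
      have : (∫ _ in Set.Ico b a, M) = (a - b) * M := by
        rw [setIntegral_const, Real.volume_real_Ico_of_le (by linarith), smul_eq_mul]
      rw [abs_of_nonneg (by linarith : (0:ℝ) ≤ a - b)]
      calc (1/α) * ∫ y in Set.Ico b a, (G y - α) ≤ (1/α) * ((a - b) * M) := by
            rw [← this]; exact mul_le_mul_of_nonneg_left hle hα0'.le
        _ = 1 / α * M * (a - b) := by ring
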